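/- For every positive integer n, lcm(1, 2, …, n) ≥ 2^{n−1}. -/

import Mathlib

open Nat Finset

/-- The lcm of `1..n` is nonzero. -/
lemma lcm_Icc_ne_zero (n : ℕ) : (Finset.Icc 1 n).lcm id ≠ 0 := by
  rw [Ne, Finset.lcm_eq_zero_iff]
  rintro ⟨x, hx, rfl⟩
  simp only [Finset.mem_Icc] at hx
  omega

/-- For a prime `p`, `log p n ≤ ν_p (lcm(1..n))`. -/
lemma log_le_factorization_lcm {p n : ℕ} (hp : p.Prime) (hn : 0 < n) :
    Nat.log p n ≤ ((Finset.Icc 1 n).lcm id).factorization p := by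
  rw [← hp.pow_dvd_iff_le_factorization (lcm_Icc_ne_zero n)]
  have hmem : p ^ Nat.log p n ∈ Finset.Icc 1 n := by
    rw [Finset.mem_Icc]
    exact ⟨Nat.one_le_pow _ _ hp.pos, Nat.pow_log_le_self p hn.ne'⟩
  exact Finset.dvd_lcm hmem

/-- Carry bound: `ν_p n + ν_p (C(n-1, k-1)) ≤ log p n`. -/
lemma carry_bound {p n k : ℕ} (hp : p.Prime) (hk : 1 ≤ k) (hkn : k ≤ n) :
    n.factorization p + ((n - 1).choose (k - 1)).factorization p ≤ Nat.log p n := by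
  have hn : 0 < n := hk.trans hkn
  set a := n.factorization p with ha_def
  have ha : a ≤ Nat.log p n := by
    rw [Nat.le_log_iff_pow_le hp.one_lt hn.ne']
    exact Nat.ordProj_le p hn.ne'
  have hc : ((n - 1).choose (k - 1)).factorization p ≤ Nat.log p n - a := by
    have hpos : 0 < (n - 1).choose (k - 1) := Nat.choose_pos (by omega)
    rw [Nat.factorization_def _ hp, @padicValNat_def _ ⟨hp⟩ _ hpos.ne']
    rw [← Nat.cast_le (α := ℕ∞), ← FiniteMultiplicity.emultiplicity_eq_multiplicity
      (Nat.finiteMultiplicity_iff.2 ⟨hp.ne_one, hpos⟩)]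
    rw [hp.emultiplicity_choose (by omega : k - 1 ≤ n - 1)
      (show Nat.log p (n - 1) < Nat.log p n + 1 from
        Nat.lt_succ_of_le (Nat.log_mono_right (by omega)))]
    rw [Nat.cast_le]
    calc #{i ∈ Ico 1 (Nat.log p n + 1) |
            p ^ i ≤ (k - 1) % p ^ i + ((n - 1) - (k - 1)) % p ^ i}
        ≤ #(Ico (a + 1) (Nat.log p n + 1)) := by
          apply Finset.card_le_card
          intro i hi
          simp only [Finset.mem_filter, Finset.mem_Ico] at hi ⊢
          obtain ⟨⟨hi1, hi2⟩, hcar⟩ := hi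
          refine ⟨?_, hi2⟩
          by_contra hia
          push_neg at hia
          have hia' : i ≤ a := by omega
          have hdvd : p ^ i ∣ n :=
            dvd_trans (pow_dvd_pow p hia') (Nat.ordProj_dvd n p)
          set q := p ^ i with hq_def
          have hq2 : 2 ≤ q := by
            calc 2 ≤ p := hp.two_le
            _ = p ^ 1 := (pow_one p).symm
            _ ≤ q := Nat.pow_le_pow_right hp.pos hi1
          have h0 : n % q = 0 := Nat.mod_eq_zero_of_dvd hdvd
          -- (n-1) % q = q - 1
          have hrlt : (n - 1) % q < q := Nat.mod_lt _ (by omega)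
          have hsucc : ((n - 1) % q + 1) % q = 0 := by
            have h1 : (1 : ℕ) % q = 1 := Nat.mod_eq_of_lt (by omega)
            calc ((n - 1) % q + 1) % q = ((n - 1) % q + 1 % q) % q := by rw [h1]
            _ = (n - 1 + 1) % q := (Nat.add_mod _ _ _).symm
            _ = n % q := by rw [Nat.sub_add_cancel hn]
            _ = 0 := h0
          have hr : (n - 1) % q = q - 1 := by
            by_contra hne
            have hlt : (n - 1) % q + 1 < q := by omega
            rw [Nat.mod_eq_of_lt hlt] at hsucc
            omega
          -- the carry sum contradiction
          set x := (k - 1) % q with hx_def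
          set y := ((n - 1) - (k - 1)) % q with hy_def
          have hxlt : x < q := Nat.mod_lt _ (by omega)
          have hylt : y < q := Nat.mod_lt _ (by omega)
          have hcong : (x + y) % q = q - 1 := by
            calc (x + y) % q = ((k - 1) + ((n - 1) - (k - 1))) % q :=
              (Nat.add_mod _ _ _).symm
            _ = (n - 1) % q := by congr 1; omega
            _ = q - 1 := hr
          have hmod : (x + y) % q = x + y - q := by
            rw [Nat.mod_eq_sub_mod hcar, Nat.mod_eq_of_lt (by omega)]
          omega
      _ ≤ Nat.log p n - a := by rw [Nat.card_Ico]; omega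
  omega

/-- Nair's divisibility: `C(n,k) * k ∣ lcm(1..n)` for `1 ≤ k ≤ n`. -/
lemma choose_mul_dvd_lcm {n k : ℕ} (hk : 1 ≤ k) (hkn : k ≤ n) :
    n.choose k * k ∣ (Finset.Icc 1 n).lcm id := by
  have hn : 0 < n := hk.trans hkn
  have hid : n.choose k * k = n * (n - 1).choose (k - 1) := by
    have := Nat.add_one_mul_choose_eq (n - 1) (k - 1)
    rw [Nat.sub_add_cancel hn,
      Nat.sub_add_cancel hk] at this
    omega
  rw [hid]
  have hne : n * (n - 1).choose (k - 1) ≠ 0 :=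
    Nat.mul_ne_zero hn.ne' (Nat.choose_pos (by omega)).ne'
  rw [← Nat.factorization_le_iff_dvd hne (lcm_Icc_ne_zero n)]
  intro p
  by_cases hp : p.Prime
  · rw [Nat.factorization_mul hn.ne' (Nat.choose_pos (by omega)).ne']
    simp only [Finsupp.coe_add, Pi.add_apply]
    exact (carry_bound hp hk hkn).trans (log_le_factorization_lcm hp hn)
  · simp [Nat.factorization_eq_zero_of_not_prime _ hp]

/-- Main estimate in the odd case `n = 2m+1`, `m ≥ 2`. -/
lemma nair_odd {m : ℕ} (hm : 2 ≤ m) :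
    2 ^ (2 * m + 1) ≤ (Finset.Icc 1 (2 * m + 1)).lcm id := by
  set L := (Finset.Icc 1 (2 * m + 1)).lcm id with hL_def
  set C := Nat.centralBinom m with hC_def
  have hCpos : 0 < C := Nat.centralBinom_pos m
  -- (2m+1) * C ∣ L
  have hB : (2 * m + 1) * C ∣ L := by
    have h1 : (2 * m + 1).choose (m + 1) * (m + 1) ∣ L :=
      choose_mul_dvd_lcm (by omega) (by omega)
    have h2 : (2 * m + 1) * C = (2 * m + 1).choose (m + 1) * (m + 1) := by
      have := Nat.add_one_mul_choose_eq (2 * m) m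
      simpa [C, Nat.centralBinom, Nat.succ_eq_add_one] using this
    rwa [h2]
  -- C * m ∣ L
  have hA : C * m ∣ L := by
    have h1 : C * m ∣ (Finset.Icc 1 (2 * m)).lcm id := by
      have := choose_mul_dvd_lcm (show 1 ≤ m by omega) (show m ≤ 2 * m by omega)
      simpa [C, Nat.centralBinom] using this
    refine h1.trans (Finset.lcm_dvd fun b hb => Finset.dvd_lcm ?_)
    simp only [Finset.mem_Icc] at hb ⊢
    omega
  -- combine: m * (2m+1) * C ∣ L
  obtain ⟨t, ht⟩ := hB
  have htpos : 0 < t := by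
    rcases Nat.eq_zero_or_pos t with h | h
    · exfalso; apply lcm_Icc_ne_zero (2 * m + 1); rw [← hL_def, ht, h, mul_zero]
    · exact h
  have hmt : m ∣ (2 * m + 1) * t := by
    have h1 : C * m ∣ C * ((2 * m + 1) * t) := by
      rw [← mul_assoc, mul_comm C (2 * m + 1), ← ht]; exact hA
    exact (mul_dvd_mul_iff_left hCpos.ne').mp h1
  have hcop : Nat.Coprime m (2 * m + 1) := by
    simp [Nat.add_comm, Nat.mul_comm]
  have hmdvd : m ∣ t := (Nat.Coprime.dvd_of_dvd_mul_left hcop) hmt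
  obtain ⟨s, rfl⟩ := hmdvd
  have hspos : 0 < s := by
    rcases Nat.eq_zero_or_pos s with h | h
    · simp [h] at htpos
    · exact h
  -- L = (2m+1) * C * (m * s) ≥ (2m+1) * C * m
  have hLge : (2 * m + 1) * C * m ≤ L := by
    rw [ht]
    have : (2 * m + 1) * C * m ≤ (2 * m + 1) * C * (m * s) := by
      apply Nat.mul_le_mul_left
      exact Nat.le_mul_of_pos_right m hspos
    exact this
  -- numeric bound
  have h4 : 4 ^ m ≤ 2 * m * C :=
    Nat.four_pow_le_two_mul_self_mul_centralBinom m (by omega)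
  have key : 2 * 2 ^ (2 * m + 1) ≤ 2 * ((2 * m + 1) * C * m) := by
    have e1 : 2 * ((2 * m + 1) * C * m) = (2 * m + 1) * (2 * m * C) := by ring
    have e2 : 2 * 2 ^ (2 * m + 1) = 4 * 4 ^ m := by
      rw [show (4 : ℕ) = 2 ^ 2 by norm_num, ← pow_mul, pow_succ]
      ring
    rw [e1, e2]
    calc 4 * 4 ^ m ≤ (2 * m + 1) * 4 ^ m :=
      Nat.mul_le_mul_right _ (by omega)
    _ ≤ (2 * m + 1) * (2 * m * C) := Nat.mul_le_mul_left _ h4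
  have : 2 ^ (2 * m + 1) ≤ (2 * m + 1) * C * m :=
    Nat.le_of_mul_le_mul_left key (by norm_num)
  exact this.trans hLge

/-- Nair's bound: `lcm(1, 2, …, n) ≥ 2^{n−1}` for every positive integer `n`. -/
theorem stmt_11 (n : ℕ) (hn : 0 < n) :
    2 ^ (n - 1) ≤ (Finset.Icc 1 n).lcm id := by
  by_cases hsmall : n ≤ 4
  · interval_cases n <;> decide
  · push_neg at hsmall
    rcases Nat.even_or_odd n with ⟨m, hm⟩ | ⟨m, hm⟩
    ·
      -- n = m + m = 2m with m ≥ 3; n - 1 = 2(m-1) + 1, m - 1 ≥ 2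
      have hm2 : 2 ≤ m - 1 := by omega
      have h1 := nair_odd hm2
      have heq : 2 * (m - 1) + 1 = n - 1 := by omega
      rw [heq] at h1
      refine h1.trans (Nat.le_of_dvd (Nat.pos_of_ne_zero (lcm_Icc_ne_zero n)) ?_)
      refine Finset.lcm_dvd fun b hb => Finset.dvd_lcm ?_
      simp only [Finset.mem_Icc] at hb ⊢
      omega
    · -- n = 2m+1 odd, n ≥ 5, m ≥ 2
      have hm2 : 2 ≤ m := by omega
      have h1 := nair_odd hm2
      have heq : 2 * m + 1 = n := by omega
      rw [heq] at h1
      calc 2 ^ (n - 1) ≤ 2 ^ n := Nat.pow_le_pow_right (by norm_num) (by omega)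
      _ ≤ _ := h1
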